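/- Mean preservation of the BDF3/EP3 scheme: let η > 0, τ > 0, and let (hⁿ)_{n≥0} be a sequence of smooth 2π-periodic functions solving the BDF3/EP3 scheme with parameters η, τ. If ∫_Q h² dx = ∫_Q h¹ dx = ∫_Q h⁰ dx, then ∫_Q hⁿ dx = ∫_Q h⁰ dx for all n ≥ 0. -/

import Mathlib

open MeasureTheory

noncomputable section

/-- The domain `ℝ²` with the Euclidean norm. -/
abbrev R2 := EuclideanSpace ℝ (Fin 2)

/-- The fundamental cell `Q = [-π, π]²`. -/
def Q : Set R2 := {x | ∀ i, x i ∈ Set.Icc (-Real.pi) Real.pi}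

/-- A function on `ℝ²` is `2π`-periodic if it is invariant under translation by
`2π e` for each standard basis vector `e`. -/
def Periodic2 {E : Type*} (u : R2 → E) : Prop :=
  ∀ (x : R2) (i : Fin 2), u (x + EuclideanSpace.single i (2 * Real.pi)) = u x

/-- Partial derivative in the `i`-th coordinate direction. -/
def pd (i : Fin 2) (u : R2 → ℝ) (x : R2) : ℝ :=
  fderiv ℝ u x (EuclideanSpace.single i 1)

/-- The gradient as a plain vector in `Fin 2 → ℝ`. -/
def gradv (u : R2 → ℝ) (x : R2) : Fin 2 → ℝ := fun i => pd i u x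

/-- The Laplacian. -/
def lap (u : R2 → ℝ) (x : R2) : ℝ := ∑ i, pd i (pd i u) x

/-- The bilaplacian `Δ²u = Δ(Δu)`. -/
def bilap (u : R2 → ℝ) (x : R2) : ℝ := lap (lap u) x

/-- The divergence of a vector field. -/
def divg (F : R2 → Fin 2 → ℝ) (x : R2) : ℝ := ∑ i, pd i (fun y => F y i) x

/-- The nonlinearity `g(z) = -z/(1+|z|²)` acting on vectors. -/
def gvec (v : Fin 2 → ℝ) : Fin 2 → ℝ := fun i => -v i / (1 + ∑ k, v k ^ 2)

/-- The BDF3/EP3 scheme with parameters `η, τ`: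
`(11h^{n+1} - 18hⁿ + 9h^{n-1} - 2h^{n-2})/(6τ)
  = -η² Δ²h^{n+1} + ∇·(g(3∇hⁿ - 3∇h^{n-1} + ∇h^{n-2}))` pointwise. -/
def BDF3EP3 (η τ : ℝ) (h : ℕ → R2 → ℝ) : Prop :=
  ∀ n : ℕ, 2 ≤ n → ∀ x : R2,
    (11 * h (n + 1) x - 18 * h n x + 9 * h (n - 1) x - 2 * h (n - 2) x) / (6 * τ)
      = -η ^ 2 * bilap (h (n + 1)) x
        + divg (fun y =>
            gvec (fun i => 3 * gradv (h n) y i - 3 * gradv (h (n - 1)) y i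
              + gradv (h (n - 2)) y i)) x

/-- The squared `L²` norm over `Q`. -/
def L2sq (u : R2 → ℝ) : ℝ := ∫ x in Q, (u x) ^ 2

/-- The `L²` norm over `Q`. -/
def L2norm (u : R2 → ℝ) : ℝ := Real.sqrt (L2sq u)

/-- `‖∇u‖₂² = ∫_Q |∇u|² dx`. -/
def gradL2sq (u : R2 → ℝ) : ℝ := ∫ x in Q, ∑ i, (pd i u x) ^ 2

/-- The energy `E(u) = ∫_Q (-(1/2) log(1+|∇u|²) + (1/2) η² (Δu)²) dx`. -/
def energy (η : ℝ) (u : R2 → ℝ) : ℝ :=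
  ∫ x in Q, (-(1 / 2) * Real.log (1 + ∑ i, (pd i u x) ^ 2)
    + (1 / 2) * η ^ 2 * (lap u x) ^ 2)

lemma contDiff_pd {f : R2 → ℝ} (hf : ContDiff ℝ (⊤:ℕ∞) f) (i : Fin 2) :
    ContDiff ℝ (⊤:ℕ∞) (pd i f) :=
  (hf.fderiv_right (by exact_mod_cast le_top)).clm_apply contDiff_const

lemma periodic_pd {f : R2 → ℝ} (hf : ContDiff ℝ (⊤:ℕ∞) f) (hp : Periodic2 f) (i : Fin 2) :
    Periodic2 (pd i f) := by
  intro x j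
  set p := EuclideanSpace.single j (2 * Real.pi) with hpdef
  have hfun : (fun y : R2 => f (y + p)) = f := funext fun y => hp y j
  have h1 : HasFDerivAt (fun y : R2 => f (y + p)) (fderiv ℝ f (x + p)) x :=
    ((hf.differentiable (by simp) (x + p)).hasFDerivAt).comp x ((hasFDerivAt_id x).add_const p)
  have h2 : fderiv ℝ f x = fderiv ℝ f (x + p) := by
    conv_lhs => rw [← hfun]
    exact h1.fderiv
  simp only [pd, ← h2]

lemma isCompact_Q : IsCompact Q := by
  have : Q = (EuclideanSpace.equiv (Fin 2) ℝ).symm ''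
      (Set.univ.pi fun _ : Fin 2 => Set.Icc (-Real.pi) Real.pi) := by
    ext x
    constructor
    · intro hx
      exact ⟨EuclideanSpace.equiv (Fin 2) ℝ x, fun i _ => hx i, by simp⟩
    · rintro ⟨y, hy, rfl⟩ i
      exact hy i (Set.mem_univ i)
  rw [this]
  exact (isCompact_univ_pi fun _ => isCompact_Icc).image
    (EuclideanSpace.equiv (Fin 2) ℝ).symm.continuous

lemma single_two_pi (i : Fin 2) :
    EuclideanSpace.single i (2 * Real.pi) = (2 * Real.pi) • EuclideanSpace.single i (1:ℝ) := by
  ext j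
  simp [EuclideanSpace.single_apply]

lemma line_integral_zero {f : R2 → ℝ} (hf : ContDiff ℝ (⊤:ℕ∞) f) (hp : Periodic2 f)
    (i : Fin 2) (p : R2) :
    ∫ b in Set.Icc (-Real.pi) Real.pi,
      pd i f (p + b • EuclideanSpace.single i (1:ℝ)) = 0 := by
  have hπ : -Real.pi ≤ Real.pi := by linarith [Real.pi_pos]
  set v : R2 := EuclideanSpace.single i (1:ℝ) with hv
  have hcont : Continuous fun b : ℝ => pd i f (p + b • v) :=
    (contDiff_pd hf i).continuous.comp (by continuity)
  have hderiv : ∀ b ∈ Set.uIcc (-Real.pi) Real.pi,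
      HasDerivAt (fun t => f (p + t • v)) (pd i f (p + b • v)) b := by
    intro b _
    have h1 : HasDerivAt (fun t : ℝ => p + t • v) v b := by
      simpa using ((hasDerivAt_id b).smul_const v).const_add p
    exact ((hf.differentiable (by simp) _).hasFDerivAt).comp_hasDerivAt b h1
  rw [MeasureTheory.integral_Icc_eq_integral_Ioc, ← intervalIntegral.integral_of_le hπ,
    intervalIntegral.integral_eq_sub_of_hasDerivAt hderiv (hcont.intervalIntegrable _ _)]
  have key : p + Real.pi • v = (p + (-Real.pi) • v) + EuclideanSpace.single i (2 * Real.pi) := by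
    rw [single_two_pi i, ← hv]
    module
  rw [key, hp]
  ring

lemma helper_integral {f : R2 → ℝ} (hf : ContDiff ℝ (⊤:ℕ∞) f) (hp : Periodic2 f)
    (i : Fin 2) (E : R2 ≃ᵐ ℝ × ℝ) (hE : MeasurePreserving E volume volume)
    (G : ℝ × ℝ → R2) (hGE : ∀ x, G (E x) = x) (hGcont : Continuous G)
    (hcoord : ∀ a b : ℝ, G (a, b) = G (a, 0) + b • EuclideanSpace.single i (1:ℝ))
    (hQ : Q = E ⁻¹' ((Set.Icc (-Real.pi) Real.pi) ×ˢ (Set.Icc (-Real.pi) Real.pi))) :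
    ∫ x in Q, pd i f x = 0 := by
  set I := Set.Icc (-Real.pi) Real.pi with hI
  have hpd : Continuous (pd i f) := (contDiff_pd hf i).continuous
  have hint : IntegrableOn (fun z => pd i f (G z)) (I ×ˢ I) volume :=
    ((hpd.comp hGcont).continuousOn).integrableOn_compact
      (isCompact_Icc.prod isCompact_Icc)
  have step1 : ∫ x in Q, pd i f x = ∫ z in I ×ˢ I, pd i f (G z) := by
    rw [hQ]
    rw [← hE.setIntegral_preimage_emb E.measurableEmbedding (fun z => pd i f (G z)) (I ×ˢ I)]
    simp only [hGE]
  rw [step1, Measure.volume_eq_prod]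
  rw [setIntegral_prod _ (by rwa [Measure.volume_eq_prod] at hint)]
  have inner : ∀ a : ℝ, (∫ b in I, pd i f (G (a, b))) = 0 := by
    intro a
    have : (fun b : ℝ => pd i f (G (a, b)))
        = fun b => pd i f (G (a, 0) + b • EuclideanSpace.single i (1:ℝ)) := by
      funext b; rw [hcoord a b]
    rw [this, hI]
    exact line_integral_zero hf hp i (G (a, 0))
  simp only [inner, integral_zero]

lemma cont_pair1 : Continuous fun z : ℝ × ℝ => ![z.1, z.2] :=
  continuous_pi fun j => by
    fin_cases j
    · simpa using continuous_fst
    · simpa using continuous_snd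

lemma cont_pair2 : Continuous fun z : ℝ × ℝ => ![z.2, z.1] :=
  continuous_pi fun j => by
    fin_cases j
    · simpa using continuous_snd
    · simpa using continuous_fst

lemma integral_pd_eq_zero {f : R2 → ℝ} (hf : ContDiff ℝ (⊤:ℕ∞) f) (hp : Periodic2 f)
    (i : Fin 2) : ∫ x in Q, pd i f x = 0 := by
  have hGcont : ∀ g : ℝ × ℝ → Fin 2 → ℝ, Continuous g →
      Continuous fun z => (EuclideanSpace.equiv (Fin 2) ℝ).symm (g z) := fun g hg =>
    (EuclideanSpace.equiv (Fin 2) ℝ).symm.continuous.comp hg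
  have hswap : MeasurePreserving (⇑(MeasurableEquiv.prodComm : ℝ × ℝ ≃ᵐ ℝ × ℝ))
      volume volume := by
    rw [Measure.volume_eq_prod]
    exact MeasureTheory.Measure.measurePreserving_swap
  fin_cases i
  · -- i = 0
    set E : R2 ≃ᵐ ℝ × ℝ :=
      (((MeasurableEquiv.toLp 2 (Fin 2 → ℝ)).symm).trans MeasurableEquiv.finTwoArrow).trans
        MeasurableEquiv.prodComm with hE
    set G : ℝ × ℝ → R2 := fun z => (EuclideanSpace.equiv (Fin 2) ℝ).symm ![z.2, z.1] with hG
    refine helper_integral hf hp 0 E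
      (((EuclideanSpace.volume_preserving_symm_measurableEquiv_toLp (Fin 2)).trans
        (volume_preserving_finTwoArrow ℝ)).trans hswap)
      G ?_ (hGcont _ cont_pair2) ?_ ?_
    · intro x
      ext j
      fin_cases j <;>
        simp [hE, hG, MeasurableEquiv.coe_toLp_symm, MeasurableEquiv.finTwoArrow,
          MeasurableEquiv.prodComm]
    · intro a b
      ext j
      fin_cases j <;> simp [hG, EuclideanSpace.single_apply]
    · ext x
      simp only [Q, hE, Set.mem_setOf_eq, Set.mem_preimage, Set.mem_prod, Set.mem_Icc,
        Fin.forall_fin_two, MeasurableEquiv.trans_apply]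
      simp [MeasurableEquiv.coe_toLp_symm, MeasurableEquiv.finTwoArrow,
        MeasurableEquiv.prodComm, Prod.le_def]
      tauto
  · -- i = 1
    set E : R2 ≃ᵐ ℝ × ℝ :=
      ((MeasurableEquiv.toLp 2 (Fin 2 → ℝ)).symm).trans MeasurableEquiv.finTwoArrow with hE
    set G : ℝ × ℝ → R2 := fun z => (EuclideanSpace.equiv (Fin 2) ℝ).symm ![z.1, z.2] with hG
    refine helper_integral hf hp 1 E
      ((EuclideanSpace.volume_preserving_symm_measurableEquiv_toLp (Fin 2)).trans
        (volume_preserving_finTwoArrow ℝ))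
      G ?_ (hGcont _ cont_pair1) ?_ ?_
    · intro x
      ext j
      fin_cases j <;>
        simp [hE, hG, MeasurableEquiv.coe_toLp_symm, MeasurableEquiv.finTwoArrow]
    · intro a b
      ext j
      fin_cases j <;> simp [hG, EuclideanSpace.single_apply]
    · ext x
      simp only [Q, hE, Set.mem_setOf_eq, Set.mem_preimage, Set.mem_prod, Set.mem_Icc,
        Fin.forall_fin_two, MeasurableEquiv.trans_apply]
      simp [MeasurableEquiv.coe_toLp_symm, MeasurableEquiv.finTwoArrow, Prod.le_def]

lemma contDiff_lap {f : R2 → ℝ} (hf : ContDiff ℝ (⊤:ℕ∞) f) : ContDiff ℝ (⊤:ℕ∞) (lap f) :=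
  ContDiff.sum fun i _ => contDiff_pd (contDiff_pd hf i) i

lemma periodic_lap {f : R2 → ℝ} (hf : ContDiff ℝ (⊤:ℕ∞) f) (hp : Periodic2 f) :
    Periodic2 (lap f) := by
  intro x j
  simp only [lap]
  exact Finset.sum_congr rfl fun i _ =>
    periodic_pd (contDiff_pd hf i) (periodic_pd hf hp i) i x j

lemma integral_divg_zero (F : R2 → Fin 2 → ℝ)
    (hF : ∀ i, ContDiff ℝ (⊤:ℕ∞) (fun y => F y i))
    (hp : ∀ i, Periodic2 (fun y => F y i)) :
    ∫ x in Q, divg F x = 0 := by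
  have : ∫ x in Q, divg F x = ∑ i, ∫ x in Q, pd i (fun y => F y i) x := by
    refine integral_finset_sum _ fun i _ => ?_
    exact ((contDiff_pd (hF i) i).continuous.continuousOn).integrableOn_compact isCompact_Q
  rw [this]
  exact Finset.sum_eq_zero fun i _ => integral_pd_eq_zero (hF i) (hp i) i

lemma integral_bilap_zero {f : R2 → ℝ} (hf : ContDiff ℝ (⊤:ℕ∞) f) (hp : Periodic2 f) :
    ∫ x in Q, bilap f x = 0 := by
  have : bilap f = divg (fun y i => pd i (lap f) y) := by
    funext x
    simp only [bilap, lap, divg]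
  rw [this]
  exact integral_divg_zero _ (fun i => contDiff_pd (contDiff_lap hf) i)
    (fun i => periodic_pd (contDiff_lap hf) (periodic_lap hf hp) i)

/-- mean preservation for the BDF3/EP3 scheme. If
`∫_Q h² = ∫_Q h¹ = ∫_Q h⁰`, then `∫_Q hⁿ = ∫_Q h⁰` for all `n ≥ 0`. -/
theorem bdf3ep3_mean_preservation (η τ : ℝ) (hη : 0 < η) (hτ : 0 < τ)
    (h : ℕ → R2 → ℝ) (hsmooth : ∀ n, ContDiff ℝ (⊤ : ℕ∞) (h n))
    (hper : ∀ n, Periodic2 (h n)) (hscheme : BDF3EP3 η τ h)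
    (hmean2 : ∫ x in Q, h 2 x = ∫ x in Q, h 0 x)
    (hmean1 : ∫ x in Q, h 1 x = ∫ x in Q, h 0 x) :
    ∀ n : ℕ, ∫ x in Q, h n x = ∫ x in Q, h 0 x := by
  set I : ℕ → ℝ := fun m => ∫ x in Q, h m x with hIdef
  have intn : ∀ m, IntegrableOn (h m) Q :=
    fun m => ((hsmooth m).continuous.continuousOn).integrableOn_compact isCompact_Q
  have hrec : ∀ n : ℕ, 2 ≤ n →
      11 * I (n + 1) - 18 * I n + 9 * I (n - 1) - 2 * I (n - 2) = 0 := by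
    intro n hn
    set w : R2 → Fin 2 → ℝ := fun y => fun i =>
      3 * gradv (h n) y i - 3 * gradv (h (n - 1)) y i + gradv (h (n - 2)) y i with hw
    have hwc : ∀ k, ContDiff ℝ (⊤:ℕ∞) (fun y => w y k) := by
      intro k
      exact ((contDiff_const.mul (contDiff_pd (hsmooth n) k)).sub
        (contDiff_const.mul (contDiff_pd (hsmooth (n-1)) k))).add
        (contDiff_pd (hsmooth (n-2)) k)
    have hwper : ∀ (x : R2) (j : Fin 2),
        w (x + EuclideanSpace.single j (2 * Real.pi)) = w x := by
      intro x j
      funext k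
      simp only [hw, gradv]
      rw [periodic_pd (hsmooth n) (hper n) k x j,
        periodic_pd (hsmooth (n-1)) (hper (n-1)) k x j,
        periodic_pd (hsmooth (n-2)) (hper (n-2)) k x j]
    have hFc : ∀ i, ContDiff ℝ (⊤:ℕ∞) (fun y => gvec (w y) i) := by
      intro i
      refine ContDiff.div ((hwc i).neg)
        (contDiff_const.add (ContDiff.sum fun k _ => (hwc k).pow 2)) fun x => ?_
      have : (0:ℝ) ≤ ∑ k, w x k ^ 2 := Finset.sum_nonneg fun k _ => sq_nonneg _
      positivity
    have hFper : ∀ i, Periodic2 (fun y => gvec (w y) i) := by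
      intro i x j
      simp only [gvec, hwper x j]
    have hbilapc : Continuous (bilap (h (n+1))) :=
      (contDiff_lap (contDiff_lap (hsmooth (n+1)))).continuous
    have hdivgc : Continuous (divg fun y => gvec (w y)) := by
      refine continuous_finset_sum _ fun i _ => ?_
      exact (contDiff_pd (hFc i) i).continuous
    have e1 : (fun x : R2 => (11 * h (n + 1) x - 18 * h n x + 9 * h (n - 1) x
          - 2 * h (n - 2) x) / (6 * τ))
        = fun x => -η ^ 2 * bilap (h (n + 1)) x + divg (fun y => gvec (w y)) x :=
      funext (hscheme n hn)
    have RHS0 : ∫ x in Q, (-η ^ 2 * bilap (h (n + 1)) x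
        + divg (fun y => gvec (w y)) x) = 0 := by
      rw [integral_add (f := fun x => -η ^ 2 * bilap (h (n + 1)) x)
        (((continuous_const.mul hbilapc : Continuous fun x => -η ^ 2 * bilap (h (n + 1)) x).continuousOn).integrableOn_compact isCompact_Q)
        (hdivgc.continuousOn.integrableOn_compact isCompact_Q),
        integral_const_mul, integral_bilap_zero (hsmooth (n+1)) (hper (n+1)),
        integral_divg_zero _ hFc hFper]
      ring
    have LHS : ∫ x in Q, (11 * h (n + 1) x - 18 * h n x + 9 * h (n - 1) x
          - 2 * h (n - 2) x) / (6 * τ)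
        = (11 * I (n+1) - 18 * I n + 9 * I (n-1) - 2 * I (n-2)) / (6 * τ) := by
      rw [integral_div]
      congr 1
      calc ∫ a in Q, (11 * h (n + 1) a - 18 * h n a + 9 * h (n - 1) a - 2 * h (n - 2) a)
          = (∫ a in Q, (11 * h (n + 1) a - 18 * h n a + 9 * h (n - 1) a))
            - ∫ a in Q, 2 * h (n - 2) a :=
            integral_sub ((((intn (n+1)).const_mul 11).sub
              ((intn n).const_mul 18)).add ((intn (n-1)).const_mul 9))
              ((intn (n-2)).const_mul 2)
        _ = ((∫ a in Q, (11 * h (n + 1) a - 18 * h n a)) + ∫ a in Q, 9 * h (n - 1) a)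
            - ∫ a in Q, 2 * h (n - 2) a := by
            congr 1
            exact integral_add (((intn (n+1)).const_mul 11).sub ((intn n).const_mul 18))
              ((intn (n-1)).const_mul 9)
        _ = (((∫ a in Q, 11 * h (n + 1) a) - ∫ a in Q, 18 * h n a)
            + ∫ a in Q, 9 * h (n - 1) a) - ∫ a in Q, 2 * h (n - 2) a := by
            congr 2
            exact integral_sub ((intn (n+1)).const_mul 11) ((intn n).const_mul 18)
        _ = 11 * I (n + 1) - 18 * I n + 9 * I (n - 1) - 2 * I (n - 2) := by
            rw [integral_const_mul, integral_const_mul, integral_const_mul, integral_const_mul]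
    have : (11 * I (n+1) - 18 * I n + 9 * I (n-1) - 2 * I (n-2)) / (6 * τ) = 0 := by
      rw [← LHS, e1, RHS0]
    have h6τ : (6 : ℝ) * τ ≠ 0 := by positivity
    exact (div_eq_zero_iff.mp this).resolve_right h6τ
  have key : ∀ m : ℕ, I m = I 0 ∧ I (m+1) = I 0 ∧ I (m+2) = I 0 := by
    intro m
    induction m with
    | zero => exact ⟨rfl, hmean1, hmean2⟩
    | succ k ih =>
      refine ⟨ih.2.1, ih.2.2, ?_⟩
      have hr := hrec (k + 2) (by omega)
      have e1 : k + 2 - 1 = k + 1 := by omega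
      have e2 : k + 2 - 2 = k := by omega
      rw [e1, e2] at hr
      have := ih.1; have := ih.2.1; have := ih.2.2
      linarith
  intro n
  exact (key n).1
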